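/- Let S ≥ 1 and let H : [0,∞) → M_S(ℝ) be continuous with H(t) essentially nonnegative (all off-diagonal entries nonnegative) for every t ≥ 0. Let x : [0,∞) → ℝ^S be differentiable with x'(t) = H(t)x(t) for all t ≥ 0. If x(0) ≥ 0 componentwise, then x(t) ≥ 0 componentwise for all t ≥ 0. -/

import Mathlib

open Set Filter Topology

private lemma key_aux
    (S : ℕ)
    (H : ℝ → Matrix (Fin S) (Fin S) ℝ)
    (hHess : ∀ t ∈ Ici (0 : ℝ), ∀ i j, i ≠ j → 0 ≤ H t i j)
    (x : ℝ → Fin S → ℝ)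
    (hx : ∀ t ∈ Ici (0 : ℝ), ∀ i,
      HasDerivWithinAt (fun s => x s i) ((H t).mulVec (x t) i) (Ici 0) t)
    (hx0 : ∀ i, 0 ≤ x 0 i)
    (T C ε : ℝ) (hε : 0 < ε)
    (hC : ∀ s ∈ Icc (0 : ℝ) T, ∀ i, (∑ j, |H s i j|) ≤ C) :
    ∀ t ∈ Icc (0 : ℝ) T, ∀ i, 0 < x t i + ε * Real.exp ((C + 1) * t) := by
  by_contra hcon
  push_neg at hcon
  obtain ⟨t₀, ht₀, i₀, hi₀⟩ := hcon
  set y : Fin S → ℝ → ℝ := fun i t => x t i + ε * Real.exp ((C + 1) * t) with hy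
  have hxc : ∀ i, ContinuousOn (fun t => x t i) (Ici 0) := fun i t ht =>
    (hx t ht i).continuousWithinAt
  have hyc : ∀ i, ContinuousOn (y i) (Ici 0) := fun i =>
    (hxc i).add (Continuous.continuousOn (by continuity))
  set Bad : Set ℝ := ⋃ i : Fin S, (Icc (0 : ℝ) T ∩ (y i) ⁻¹' Iic 0) with hBad
  have hBadne : Bad.Nonempty := ⟨t₀, Set.mem_iUnion.2 ⟨i₀, ht₀, hi₀⟩⟩
  have hBadsub : Bad ⊆ Icc (0 : ℝ) T := by
    intro s hs
    obtain ⟨i, hi, _⟩ := Set.mem_iUnion.1 hs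
    exact hi
  have hBadclosed : IsClosed Bad := by
    refine isClosed_iUnion_of_finite fun i => ?_
    exact ContinuousOn.preimage_isClosed_of_isClosed
      ((hyc i).mono (Icc_subset_Ici_self)) isClosed_Icc isClosed_Iic
  have hBadbdd : BddBelow Bad := ⟨0, fun s hs => (hBadsub hs).1⟩
  set t₁ : ℝ := sInf Bad with ht₁def
  have ht₁mem : t₁ ∈ Bad := hBadclosed.csInf_mem hBadne hBadbdd
  obtain ⟨i, ht₁Icc, ht₁le⟩ := Set.mem_iUnion.1 ht₁mem
  simp only [Set.mem_inter_iff, Set.mem_preimage, Set.mem_Iic] at ht₁Icc ht₁le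
  have hy0 : ∀ j, 0 < y j 0 := by
    intro j
    have : y j 0 = x 0 j + ε * Real.exp 0 := by simp [hy]
    simp only [Real.exp_zero, mul_one] at this
    rw [this]
    linarith [hx0 j]
  have ht₁pos : 0 < t₁ := by
    rcases lt_or_eq_of_le ht₁Icc.1 with h | h
    · exact h
    · exfalso; rw [← h] at ht₁le; linarith [hy0 i]
  -- for s in [0, t₁), all components of y are positive
  have hbefore : ∀ s ∈ Ico (0 : ℝ) t₁, ∀ j, 0 < y j s := by
    intro s hs j
    by_contra hneg
    push_neg at hneg
    have hsmem : s ∈ Bad := Set.mem_iUnion.2 ⟨j, ⟨hs.1, hs.2.le.trans ht₁Icc.2⟩, hneg⟩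
    exact absurd (csInf_le hBadbdd hsmem) (not_le.2 hs.2)
  -- y j t₁ ≥ 0 for all j, by continuity from the left
  have hge : ∀ j, 0 ≤ y j t₁ := by
    intro j
    have hne : (𝓝[Ico (0 : ℝ) t₁] t₁).NeBot := by
      exact right_nhdsWithin_Ico_neBot ht₁pos
    have htend : Filter.Tendsto (y j) (𝓝[Ico (0 : ℝ) t₁] t₁) (𝓝 (y j t₁)) := by
      refine ((hyc j t₁ (le_of_lt ht₁pos)).mono ?_)
      exact fun s hs => hs.1
    refine ge_of_tendsto htend ?_
    filter_upwards [eventually_mem_nhdsWithin] with s hs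
    exact (hbefore s hs j).le
  have hyi0 : y i t₁ = 0 := le_antisymm ht₁le (hge i)
  -- derivative of y i at t₁
  have hIci : Ici (0 : ℝ) ∈ 𝓝 t₁ := Ici_mem_nhds ht₁pos
  have hdx : HasDerivAt (fun s => x s i) ((H t₁).mulVec (x t₁) i) t₁ :=
    (hx t₁ (le_of_lt ht₁pos) i).hasDerivAt hIci
  have hdexp : HasDerivAt (fun s => ε * Real.exp ((C + 1) * s))
      (ε * (Real.exp ((C + 1) * t₁) * (C + 1))) t₁ := by
    have h1 : HasDerivAt (fun s : ℝ => (C + 1) * s) (C + 1) t₁ := by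
      simpa using (hasDerivAt_id t₁).const_mul (C + 1)
    exact (h1.exp.const_mul ε)
  have hdy : HasDerivAt (y i)
      ((H t₁).mulVec (x t₁) i + ε * (Real.exp ((C + 1) * t₁) * (C + 1))) t₁ :=
    hdx.add hdexp
  set E : ℝ := Real.exp ((C + 1) * t₁) with hE
  have hEpos : 0 < E := Real.exp_pos _
  -- x t₁ j ≥ -(ε * E)
  have hxlb : ∀ j, -(ε * E) ≤ x t₁ j := fun j => by
    have := hge j; simp only [hy] at this; linarith
  have hxi : x t₁ i = -(ε * E) := by
    simp only [hy] at hyi0; linarith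
  -- lower bound the derivative
  have hmv : (H t₁).mulVec (x t₁) i = ∑ j, H t₁ i j * x t₁ j := rfl
  have hsumlb : -(C * (ε * E)) ≤ (H t₁).mulVec (x t₁) i := by
    rw [hmv]
    have hterm : ∀ j, -(|H t₁ i j| * (ε * E)) ≤ H t₁ i j * x t₁ j := by
      intro j
      rcases eq_or_ne j i with rfl | hne
      · rw [hxi]
        have hle : H t₁ j j ≤ |H t₁ j j| := le_abs_self _
        have hεE : 0 < ε * E := mul_pos hε hEpos
        nlinarith
      · have hpos : 0 ≤ H t₁ i j := hHess t₁ (le_of_lt ht₁pos) i j (Ne.symm hne)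
        calc -(|H t₁ i j| * (ε * E)) = H t₁ i j * (-(ε * E)) := by
              rw [abs_of_nonneg hpos]; ring
          _ ≤ H t₁ i j * x t₁ j := mul_le_mul_of_nonneg_left (hxlb j) hpos
    calc -(C * (ε * E)) ≤ -((∑ j, |H t₁ i j|) * (ε * E)) := by
          have := hC t₁ ⟨le_of_lt ht₁pos, ht₁Icc.2⟩ i
          nlinarith [mul_pos hε hEpos]
      _ = ∑ j, -(|H t₁ i j| * (ε * E)) := by
          rw [Finset.sum_mul, ← Finset.sum_neg_distrib]
      _ ≤ ∑ j, H t₁ i j * x t₁ j := Finset.sum_le_sum fun j _ => hterm j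
  have hdpos : 0 < (H t₁).mulVec (x t₁) i + ε * (Real.exp ((C + 1) * t₁) * (C + 1)) := by
    have : ε * (Real.exp ((C + 1) * t₁) * (C + 1)) = ε * E * (C + 1) := by rw [← hE]; ring
    rw [this]
    nlinarith [mul_pos hε hEpos]
  -- contradiction: slope of y i at t₁ from the left
  have hslope := hasDerivAt_iff_tendsto_slope.1 hdy
  have hslope' : Filter.Tendsto (slope (y i) t₁) (𝓝[<] t₁)
      (𝓝 ((H t₁).mulVec (x t₁) i + ε * (Real.exp ((C + 1) * t₁) * (C + 1)))) :=
    hslope.mono_left (nhdsWithin_mono _ fun s hs => ne_of_lt hs)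
  have hev : ∀ᶠ s in 𝓝[<] t₁, 0 < slope (y i) t₁ s := hslope'.eventually_const_lt hdpos
  have hev2 : ∀ᶠ s in 𝓝[<] t₁, 0 < s :=
    eventually_nhdsWithin_of_eventually_nhds (eventually_gt_nhds ht₁pos)
  have hev3 : ∀ᶠ s in 𝓝[<] t₁, s < t₁ := eventually_mem_nhdsWithin
  obtain ⟨s, hs1, hs2, hs3⟩ := (hev.and (hev2.and hev3)).exists
  have hsneg : y i s < 0 := by
    have hd : s - t₁ < 0 := by linarith
    have hsl : slope (y i) t₁ s = (y i s - y i t₁) / (s - t₁) := slope_def_field _ _ _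
    rw [hsl, hyi0, sub_zero] at hs1
    by_contra hge'
    push_neg at hge'
    have := div_nonpos_of_nonneg_of_nonpos hge' hd.le
    linarith
  exact absurd (hbefore s ⟨hs2.le, hs3⟩ i) (not_lt.2 hsneg.le)

/-- If `H(t)` is continuous and essentially nonnegative (off-diagonal entries
nonnegative) for every `t ≥ 0`, and `x' = H(t) x` on `[0,∞)` with `x(0) ≥ 0`
componentwise, then `x(t) ≥ 0` componentwise for all `t ≥ 0`. -/
theorem nonneg_preserved_of_essentially_nonneg
    (S : ℕ) (hS : 1 ≤ S)
    (H : ℝ → Matrix (Fin S) (Fin S) ℝ)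
    (hHcont : ∀ i j, ContinuousOn (fun t => H t i j) (Ici (0 : ℝ)))
    (hHess : ∀ t ∈ Ici (0 : ℝ), ∀ i j, i ≠ j → 0 ≤ H t i j)
    (x : ℝ → Fin S → ℝ)
    (hx : ∀ t ∈ Ici (0 : ℝ), ∀ i,
      HasDerivWithinAt (fun s => x s i) ((H t).mulVec (x t) i) (Ici 0) t)
    (hx0 : ∀ i, 0 ≤ x 0 i) :
    ∀ t ∈ Ici (0 : ℝ), ∀ i, 0 ≤ x t i := by
  intro t ht i
  -- bound on the matrix entries on [0, t]
  have hgcont : ContinuousOn (fun s => ∑ p : Fin S, ∑ q : Fin S, |H s p q|) (Icc 0 t) := by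
    apply continuousOn_finset_sum
    intro p _
    apply continuousOn_finset_sum
    intro q _
    exact ((hHcont p q).mono Icc_subset_Ici_self).abs
  obtain ⟨C, hCbound⟩ := isCompact_Icc.exists_bound_of_continuousOn hgcont
  have hC : ∀ s ∈ Icc (0 : ℝ) t, ∀ j, (∑ k, |H s j k|) ≤ C := by
    intro s hs j
    have h1 : (∑ k, |H s j k|) ≤ ∑ p : Fin S, ∑ q : Fin S, |H s p q| := by
      apply Finset.single_le_sum (f := fun p => ∑ q : Fin S, |H s p q|)
      · intro p _
        exact Finset.sum_nonneg fun q _ => abs_nonneg _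
      · exact Finset.mem_univ j
    have h2 := hCbound s hs
    rw [Real.norm_eq_abs] at h2
    linarith [le_abs_self (∑ p : Fin S, ∑ q : Fin S, |H s p q|)]
  by_contra hneg
  push_neg at hneg
  set ε : ℝ := -(x t i) / (2 * Real.exp ((C + 1) * t)) with hε
  have hexp : 0 < Real.exp ((C + 1) * t) := Real.exp_pos _
  have hεpos : 0 < ε := div_pos (by linarith) (by linarith)
  have hkey := key_aux S H hHess x hx hx0 t C ε hεpos hC t ⟨ht, le_refl t⟩ i
  have : ε * Real.exp ((C + 1) * t) = -(x t i) / 2 := by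
    rw [hε]; field_simp
  rw [this] at hkey
  linarith
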